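/- Let g ∈ F⟨Z⟩ be a homogeneous polynomial of degree d computed by an algebraic branching program P with S vertices, with source vertex 1 and sink vertex S, and let A_1,...,A_n ∈ M_S(F) be the transfer matrices of P (A_i(k,l) is the coefficient of z_i in the linear form labeling edge (k,l), or 0 if there is no edge). Then for every homogeneous f ∈ F⟨Z⟩ of degree d, the (1,S) entry of the matrix f(A_1 z_1,...,A_n z_n) ∈ M_S(F⟨Z⟩) equals the Hadamard product f∘g. -/

import Mathlib

/-- Hadamard (coefficientwise) product on `F⟨Z⟩`. -/
noncomputable def hadamard {F : Type*} [CommRing F] {X : Type*}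
    (f g : MonoidAlgebra F (FreeMonoid X)) : MonoidAlgebra F (FreeMonoid X) :=
  MonoidAlgebra.ofCoeff (Finsupp.zipWith (· * ·) (mul_zero 0) f.coeff g.coeff)

/-- Evaluation of a noncommutative polynomial at `A_1 z_1, …, A_n z_n` in `M_S(F⟨Z⟩)`. -/
noncomputable def evalAtMatVars {F : Type*} [Field F] {n S : ℕ}
    (A : Fin n → Matrix (Fin S) (Fin S) F) :
    MonoidAlgebra F (FreeMonoid (Fin n)) →ₐ[F]
      Matrix (Fin S) (Fin S) (MonoidAlgebra F (FreeMonoid (Fin n))) :=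
  MonoidAlgebra.lift F _ (FreeMonoid (Fin n))
    (FreeMonoid.lift fun i =>
      (A i).map fun c =>
        (MonoidAlgebra.ofCoeff (Finsupp.single (FreeMonoid.of i) c) : MonoidAlgebra F (FreeMonoid (Fin n))))

lemma prod_map_entry {F : Type*} [Field F] {n S : ℕ}
    (A : Fin n → Matrix (Fin S) (Fin S) F) (l : List (Fin n)) (p q : Fin S) :
    ((l.map fun i => ((A i).map fun c =>
        (MonoidAlgebra.ofCoeff (Finsupp.single (FreeMonoid.of i) c) : MonoidAlgebra F (FreeMonoid (Fin n))))) :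
        List (Matrix (Fin S) (Fin S) (MonoidAlgebra F (FreeMonoid (Fin n))))).prod p q
      = MonoidAlgebra.ofCoeff (Finsupp.single (FreeMonoid.ofList l) (((l.map A).prod) p q)) := by
  induction l generalizing p with
  | nil =>
    simp only [List.map_nil, List.prod_nil]
    rw [Matrix.one_apply, Matrix.one_apply]
    split
    · rfl
    · simp
  | cons i l ih =>
    simp only [List.map_cons, List.prod_cons, Matrix.mul_apply, Matrix.map_apply, ih]
    simp only [MonoidAlgebra.ofCoeff_single, MonoidAlgebra.single_mul_single]
    rw [← MonoidAlgebra.coeff_inj]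
    simp only [MonoidAlgebra.coeff_sum, MonoidAlgebra.coeff_single, MonoidAlgebra.coeff_ofCoeff]
    rw [← Finsupp.single_finset_sum]
    congr 1

/-- If `g` is homogeneous of degree `d` and its coefficients are computed by the
transfer matrices `A_1,…,A_n` of an ABP (i.e. `g(m) = (A_{i_1}⋯A_{i_d})(1,S)` for each
word `m = z_{i_1}⋯z_{i_d}` of length `d`), then for any homogeneous `f` of degree `d`,
the `(1,S)` entry of `f(A_1 z_1,…,A_n z_n)` is the Hadamard product `f ∘ g`. -/
theorem entry_evalAtMatVars_eq_hadamard {F : Type*} [Field F] {n S d : ℕ} (hS : 0 < S)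
    (f g : MonoidAlgebra F (FreeMonoid (Fin n)))
    (hf : ∀ m ∈ Finsupp.support f.coeff, (FreeMonoid.toList m).length = d)
    (A : Fin n → Matrix (Fin S) (Fin S) F)
    (hg : ∀ m : FreeMonoid (Fin n), (FreeMonoid.toList m).length = d →
      g.coeff m = ((FreeMonoid.toList m).map A).prod ⟨0, hS⟩ ⟨S - 1, by omega⟩)
    (hg' : ∀ m : FreeMonoid (Fin n), (FreeMonoid.toList m).length ≠ d → g.coeff m = 0) :
    evalAtMatVars A f ⟨0, hS⟩ ⟨S - 1, by omega⟩ = hadamard f g := by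
  set p : Fin S := ⟨0, hS⟩ with hp
  set q : Fin S := ⟨S - 1, by omega⟩ with hq
  have key : ∀ (m : FreeMonoid (Fin n)) (c : F),
      evalAtMatVars A (MonoidAlgebra.ofCoeff (Finsupp.single m c)) p q
        = MonoidAlgebra.ofCoeff (Finsupp.single m (c * (((FreeMonoid.toList m).map A).prod p q))) := by
    intro m c
    have h1 : evalAtMatVars A (MonoidAlgebra.ofCoeff (Finsupp.single m c))
        = c • (((FreeMonoid.toList m).map fun i =>
            (A i).map fun x =>
              (MonoidAlgebra.ofCoeff (Finsupp.single (FreeMonoid.of i) x) : MonoidAlgebra F (FreeMonoid (Fin n)))) :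
            List (Matrix (Fin S) (Fin S) (MonoidAlgebra F (FreeMonoid (Fin n))))).prod := by
      simp [evalAtMatVars, MonoidAlgebra.lift_single, FreeMonoid.lift_apply, FreeMonoid.prodAux_eq]
    rw [h1]
    have h2 := prod_map_entry A (FreeMonoid.toList m) p q
    rw [Matrix.smul_apply, h2, FreeMonoid.ofList_toList, MonoidAlgebra.ofCoeff_single, MonoidAlgebra.ofCoeff_single,
      MonoidAlgebra.smul_single, smul_eq_mul]
  have hsum : evalAtMatVars A f p q
      = ∑ m ∈ f.coeff.support, MonoidAlgebra.ofCoeff (Finsupp.single m (f.coeff m * (((FreeMonoid.toList m).map A).prod p q))) := by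
    conv_lhs => rw [← MonoidAlgebra.sum_coeff_single f, Finsupp.sum, map_sum]
    rw [Matrix.sum_apply]
    exact Finset.sum_congr rfl fun m _ => key m (f.coeff m)
  rw [hsum]
  ext m'
  rw [MonoidAlgebra.coeff_sum, Finset.sum_apply']
  unfold hadamard
  simp only [MonoidAlgebra.coeff_ofCoeff]
  rw [Finsupp.zipWith_apply]
  by_cases hm : m' ∈ f.coeff.support
  · rw [Finset.sum_eq_single m']
    · rw [Finsupp.single_eq_same, hg m' (hf m' hm)]
    · intro b _ hb; exact Finsupp.single_eq_of_ne hb.symm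
    · intro h; exact absurd hm h
  · have h0 : f.coeff m' = 0 := Finsupp.notMem_support_iff.mp hm
    rw [h0, zero_mul]
    refine Finset.sum_eq_zero fun b hb => ?_
    exact Finsupp.single_eq_of_ne (fun h => hm (h ▸ hb))
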